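/- Let g(y) = ∑_{m≥1} (φ_m/m) y^m be the compositional inverse of y = 1/f(x) where f(x) = Θ(x+z)/Θ(x). Suppose the derivation d/dA on the coefficient ring satisfies (d/dA) f(x) = x·f(x) (as established from the commutation relation [d/dA, D_z] = 2·ind applied to Θ). Then (d/dA) g(y) = g(y)·D_y g(y), where D_y = y d/dy. Equivalently, for all m ≥ 1: (d/dA) φ_m = (1/2) ∑_{i+j=m, i,j ≥ 1} (m^2/(i j)) φ_i φ_j. -/

import Mathlib

noncomputable section

/-- Composition `f ∘ g` of formal power series (intended for `g` with zero constant term,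
in which case it agrees with the substitution of `g` into `f`). -/
def pcomp {R : Type*} [CommRing R] (f g : PowerSeries R) : PowerSeries R :=
  PowerSeries.mk fun N =>
    ∑ n ∈ Finset.range (N + 1), PowerSeries.coeff n f * PowerSeries.coeff N (g ^ n)

/-- Coefficient-wise extension of the derivation `d/dA` on `R` to power series. -/
def Dc {R : Type*} [CommRing R] [Algebra ℚ R] (D : Derivation ℚ R R) (f : PowerSeries R) :
    PowerSeries R :=
  PowerSeries.mk fun n => D (PowerSeries.coeff n f)

/-- The operator `D_y = y d/dy`. -/
def Dy {R : Type*} [CommRing R] (f : PowerSeries R) : PowerSeries R :=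
  PowerSeries.mk fun n => n • PowerSeries.coeff n f

set_option linter.unusedSectionVars false

namespace Anomaly

open PowerSeries Finset

variable {R : Type*} [CommRing R]

lemma coeff_pcomp (f g : PowerSeries R) (N : ℕ) :
    PowerSeries.coeff N (pcomp f g)
      = ∑ n ∈ Finset.range (N + 1),
          PowerSeries.coeff n f * PowerSeries.coeff N (g ^ n) :=
  PowerSeries.coeff_mk _ _

lemma coeff_Dy (f : PowerSeries R) (N : ℕ) :
    PowerSeries.coeff N (Dy f) = N • PowerSeries.coeff N f :=
  PowerSeries.coeff_mk _ _

lemma coeff_pow_lt (g : PowerSeries R) (hg0 : PowerSeries.coeff 0 g = 0)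
    {n N : ℕ} (hN : N < n) : PowerSeries.coeff N (g ^ n) = 0 := by
  have hdvd : (PowerSeries.X : PowerSeries R) ^ n ∣ g ^ n :=
    pow_dvd_pow_of_dvd (PowerSeries.X_dvd_iff.mpr (by
      rwa [← PowerSeries.coeff_zero_eq_constantCoeff_apply])) n
  exact PowerSeries.X_pow_dvd_iff.mp hdvd N hN

variable [Algebra ℚ R] (D : Derivation ℚ R R)

lemma coeff_Dc (f : PowerSeries R) (N : ℕ) :
    PowerSeries.coeff N (Dc D f) = D (PowerSeries.coeff N f) :=
  PowerSeries.coeff_mk _ _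

lemma Dc_mul (f g : PowerSeries R) : Dc D (f * g) = Dc D f * g + f * Dc D g := by
  ext N
  simp only [coeff_Dc, PowerSeries.coeff_mul, map_add, map_sum, coeff_Dc]
  rw [← Finset.sum_add_distrib]
  refine Finset.sum_congr rfl fun p _ => ?_
  rw [D.leibniz]
  simp only [smul_eq_mul]
  ring

lemma Dc_X : Dc D (PowerSeries.X : PowerSeries R) = 0 := by
  ext N
  simp only [coeff_Dc, PowerSeries.coeff_X, map_zero]
  split_ifs <;> simp

lemma Dc_one : Dc D (1 : PowerSeries R) = 0 := by
  ext N
  simp only [coeff_Dc, PowerSeries.coeff_one, map_zero]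
  split_ifs <;> simp

lemma Dc_X_mul (f : PowerSeries R) : Dc D (PowerSeries.X * f) = PowerSeries.X * Dc D f := by
  rw [Dc_mul, Dc_X]; ring

lemma Dy_mul (f g : PowerSeries R) : Dy (f * g) = Dy f * g + f * Dy g := by
  ext N
  simp only [coeff_Dy, map_add, PowerSeries.coeff_mul, Finset.smul_sum, coeff_Dy]
  rw [← Finset.sum_add_distrib]
  refine Finset.sum_congr rfl fun p hp => ?_
  have hN : p.1 + p.2 = N := Finset.HasAntidiagonal.mem_antidiagonal.mp hp
  rw [← hN]
  simp only [smul_eq_mul, nsmul_eq_mul]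
  push_cast
  ring

lemma Dy_X_mul (f : PowerSeries R) :
    Dy (PowerSeries.X * f) = PowerSeries.X * f + PowerSeries.X * Dy f := by
  ext N
  cases N with
  | zero =>
    simp [coeff_Dy, PowerSeries.coeff_zero_eq_constantCoeff_apply]
  | succ n =>
    simp only [coeff_Dy, map_add, PowerSeries.coeff_succ_X_mul, coeff_Dy, succ_nsmul,
      nsmul_eq_mul]
    push_cast
    ring

lemma E_pow (E : PowerSeries R → PowerSeries R)
    (hE : ∀ a b, E (a * b) = E a * b + a * E b) (g : PowerSeries R) :
    ∀ n : ℕ, E (g ^ (n + 1)) = (n + 1 : ℕ) • (g ^ n * E g) := by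
  intro n
  induction n with
  | zero => simp [pow_one]
  | succ n ih =>
    have h2 : g ^ (n + 2) = g * g ^ (n + 1) := by ring
    rw [h2, hE, ih, succ_nsmul]
    simp only [nsmul_eq_mul]
    push_cast
    ring

/-- `h'(g)`, the composition of the derivative of `h` with `g`. -/
def Tser (h g : PowerSeries R) : PowerSeries R :=
  PowerSeries.mk fun N => ∑ n ∈ Finset.range (N + 1),
    (n + 1 : ℕ) • PowerSeries.coeff (n + 1) h * PowerSeries.coeff N (g ^ n)

lemma key (h g u : PowerSeries R) (hg0 : PowerSeries.coeff 0 g = 0)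
    (hu0 : PowerSeries.coeff 0 u = 0) (N : ℕ) :
    ∑ n ∈ Finset.range N, PowerSeries.coeff (n + 1) h *
        PowerSeries.coeff N ((n + 1 : ℕ) • (g ^ n * u))
      = PowerSeries.coeff N (Tser h g * u) := by
  have expand : ∀ n : ℕ, PowerSeries.coeff (n + 1) h *
      PowerSeries.coeff N ((n + 1 : ℕ) • (g ^ n * u))
      = ∑ p ∈ Finset.HasAntidiagonal.antidiagonal N, ((n + 1 : ℕ) : R) * PowerSeries.coeff (n + 1) h
          * PowerSeries.coeff p.1 (g ^ n) * PowerSeries.coeff p.2 u := by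
    intro n
    rw [map_nsmul, nsmul_eq_mul, PowerSeries.coeff_mul, Finset.mul_sum, Finset.mul_sum]
    exact Finset.sum_congr rfl fun p _ => by ring
  have hRHS : PowerSeries.coeff N (Tser h g * u)
      = ∑ p ∈ Finset.HasAntidiagonal.antidiagonal N, ∑ n ∈ Finset.range (p.1 + 1),
          ((n + 1 : ℕ) : R) * PowerSeries.coeff (n + 1) h
            * PowerSeries.coeff p.1 (g ^ n) * PowerSeries.coeff p.2 u := by
    rw [PowerSeries.coeff_mul]
    refine Finset.sum_congr rfl fun p _ => ?_
    rw [Tser, PowerSeries.coeff_mk, Finset.sum_mul]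
    refine Finset.sum_congr rfl fun n _ => ?_
    rw [nsmul_eq_mul]
  have step2 : ∀ p ∈ Finset.HasAntidiagonal.antidiagonal N,
      ∑ n ∈ Finset.range (p.1 + 1), ((n + 1 : ℕ) : R) * PowerSeries.coeff (n + 1) h
          * PowerSeries.coeff p.1 (g ^ n) * PowerSeries.coeff p.2 u
      = ∑ n ∈ Finset.range (N + 1), ((n + 1 : ℕ) : R) * PowerSeries.coeff (n + 1) h
          * PowerSeries.coeff p.1 (g ^ n) * PowerSeries.coeff p.2 u := by
    intro p hp
    have hle : p.1 + 1 ≤ N + 1 := by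
      have := Finset.HasAntidiagonal.mem_antidiagonal.mp hp; omega
    refine Finset.sum_subset (Finset.range_subset_range.mpr hle) fun n hn hn' => ?_
    have : p.1 < n := by
      simp only [Finset.mem_range] at hn hn'; omega
    rw [coeff_pow_lt g hg0 this]
    ring
  rw [hRHS, Finset.sum_congr rfl step2, Finset.sum_comm]
  rw [Finset.sum_range_succ]
  have hlast : ∑ p ∈ Finset.HasAntidiagonal.antidiagonal N, ((N + 1 : ℕ) : R) * PowerSeries.coeff (N + 1) h
      * PowerSeries.coeff p.1 (g ^ N) * PowerSeries.coeff p.2 u = 0 := by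
    refine Finset.sum_eq_zero fun p hp => ?_
    have hpN : p.1 + p.2 = N := Finset.HasAntidiagonal.mem_antidiagonal.mp hp
    rcases lt_or_eq_of_le (Nat.le_of_lt_succ (Nat.lt_succ_of_le (Nat.le.intro hpN))) with hlt | heq
    · rw [coeff_pow_lt g hg0 hlt]; ring
    · have hp2 : p.2 = 0 := by omega
      rw [hp2, hu0]; ring
  rw [hlast, add_zero]
  exact Finset.sum_congr rfl fun n _ => expand n

lemma Dc_pcomp (h g : PowerSeries R) (hg0 : PowerSeries.coeff 0 g = 0) :
    Dc D (pcomp h g) = pcomp (Dc D h) g + Tser h g * Dc D g := by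
  have hu0 : PowerSeries.coeff 0 (Dc D g) = 0 := by
    rw [coeff_Dc, hg0, map_zero]
  ext N
  rw [map_add, coeff_Dc, coeff_pcomp, coeff_pcomp, map_sum]
  have lhs : ∀ n : ℕ, D (PowerSeries.coeff n h * PowerSeries.coeff N (g ^ n))
      = D (PowerSeries.coeff n h) * PowerSeries.coeff N (g ^ n)
        + PowerSeries.coeff n h * D (PowerSeries.coeff N (g ^ n)) := by
    intro n
    rw [D.leibniz]
    simp only [smul_eq_mul]
    ring
  rw [Finset.sum_congr rfl fun n _ => lhs n, Finset.sum_add_distrib]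
  congr 1
  · exact Finset.sum_congr rfl fun n _ => by rw [coeff_Dc]
  · rw [Finset.sum_range_succ']
    have h0 : PowerSeries.coeff 0 h * D (PowerSeries.coeff N (g ^ 0)) = 0 := by
      rw [pow_zero, PowerSeries.coeff_one]
      split_ifs <;> simp
    rw [h0, add_zero]
    rw [← key h g (Dc D g) hg0 hu0 N]
    refine Finset.sum_congr rfl fun n _ => ?_
    congr 1
    rw [← coeff_Dc D, E_pow (Dc D) (Dc_mul D) g n]

lemma Dy_pcomp (h g : PowerSeries R) (hg0 : PowerSeries.coeff 0 g = 0) :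
    Dy (pcomp h g) = Tser h g * Dy g := by
  have hu0 : PowerSeries.coeff 0 (Dy g) = 0 := by
    rw [coeff_Dy, zero_smul]
  ext N
  rw [coeff_Dy, coeff_pcomp, Finset.smul_sum]
  have lhs : ∀ n : ℕ, N • (PowerSeries.coeff n h * PowerSeries.coeff N (g ^ n))
      = PowerSeries.coeff n h * PowerSeries.coeff N (Dy (g ^ n)) := by
    intro n
    rw [coeff_Dy, mul_smul_comm]
  rw [Finset.sum_congr rfl fun n _ => lhs n, Finset.sum_range_succ']
  have h0 : PowerSeries.coeff 0 h * PowerSeries.coeff N (Dy ((g : PowerSeries R) ^ 0)) = 0 := by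
    rw [pow_zero, coeff_Dy, PowerSeries.coeff_one]
    cases N <;> simp
  rw [h0, add_zero, ← key h g (Dy g) hg0 hu0 N]
  refine Finset.sum_congr rfl fun n _ => ?_
  congr 1
  rw [E_pow Dy Dy_mul g n]

lemma pcomp_X_mul (h g : PowerSeries R) (hg0 : PowerSeries.coeff 0 g = 0) :
    pcomp (PowerSeries.X * h) g = g * pcomp h g := by
  ext N
  rw [PowerSeries.coeff_mul, coeff_pcomp, Finset.sum_range_succ']
  have h0 : PowerSeries.coeff 0 (PowerSeries.X * h) * PowerSeries.coeff N ((g : PowerSeries R) ^ 0) = 0 := by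
    simp [PowerSeries.coeff_zero_eq_constantCoeff_apply]
  rw [h0, add_zero]
  have lhs : ∀ n : ℕ, PowerSeries.coeff (n + 1) (PowerSeries.X * h) * PowerSeries.coeff N (g ^ (n + 1))
      = PowerSeries.coeff n h * PowerSeries.coeff N (g ^ (n + 1)) := fun n => by
    rw [PowerSeries.coeff_succ_X_mul]
  rw [Finset.sum_congr rfl fun n _ => lhs n]
  have rhs : ∀ p ∈ Finset.HasAntidiagonal.antidiagonal N,
      PowerSeries.coeff p.1 g * PowerSeries.coeff p.2 (pcomp h g)
      = ∑ n ∈ Finset.range (N + 1), PowerSeries.coeff n h *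
          (PowerSeries.coeff p.1 g * PowerSeries.coeff p.2 (g ^ n)) := by
    intro p hp
    have hle : p.2 + 1 ≤ N + 1 := by
      have := Finset.HasAntidiagonal.mem_antidiagonal.mp hp; omega
    rw [coeff_pcomp, Finset.mul_sum]
    rw [← Finset.sum_subset (Finset.range_subset_range.mpr hle) fun n hn hn' => ?_]
    · exact Finset.sum_congr rfl fun n _ => by ring
    · have : p.2 < n := by
        simp only [Finset.mem_range] at hn hn'; omega
      rw [coeff_pow_lt g hg0 this]
      ring
  rw [Finset.sum_congr rfl rhs, Finset.sum_comm]
  have inner : ∀ n : ℕ, ∑ p ∈ Finset.HasAntidiagonal.antidiagonal N, PowerSeries.coeff n h *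
      (PowerSeries.coeff p.1 g * PowerSeries.coeff p.2 (g ^ n))
      = PowerSeries.coeff n h * PowerSeries.coeff N (g ^ (n + 1)) := by
    intro n
    rw [← Finset.mul_sum, pow_succ']
    rw [PowerSeries.coeff_mul]
  rw [Finset.sum_congr rfl fun n _ => inner n, Finset.sum_range_succ]
  rw [coeff_pow_lt g hg0 (Nat.lt_succ_self N), mul_zero, add_zero]

end Anomaly

/-- **Proposition 3.6** (holomorphic anomaly equation), abstract form.
Write `f(x) = h(x)/x` (so `h = x·f(x)`, with `h` having unit constant term for
`f = Θ(x+z)/Θ(x)`), and let `g(y) = ∑_{m≥1} (φ_m/m) y^m` be the compositional inverse of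
`1/f`, i.e. `y·h(g(y)) = g(y)`.  If the derivation `d/dA` satisfies `(d/dA) f = x·f`,
i.e. `(d/dA) h = x·h`, then `(d/dA) g = g · D_y g`. -/
theorem stmt13 {R : Type*} [CommRing R] [Algebra ℚ R] (D : Derivation ℚ R R)
    (h g : PowerSeries R)
    (hg0 : PowerSeries.coeff 0 g = 0) (hg1 : IsUnit (PowerSeries.coeff 1 g))
    (hcomp : PowerSeries.X * pcomp h g = g)
    (hDA : Dc D h = PowerSeries.X * h) :
    Dc D g = g * Dy g := by
  classical
  set T := Anomaly.Tser h g with hT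
  have e1 : PowerSeries.X * (g * pcomp h g) = g * g := by
    rw [mul_comm g (pcomp h g), ← mul_assoc, hcomp]
  have hDcg : Dc D g = g * g + (PowerSeries.X * T) * Dc D g := by
    conv_lhs => rw [← hcomp]
    rw [Anomaly.Dc_X_mul, Anomaly.Dc_pcomp D h g hg0, hDA, Anomaly.pcomp_X_mul h g hg0,
      mul_add, e1, ← mul_assoc]
  have hDyg : Dy g = g + (PowerSeries.X * T) * Dy g := by
    conv_lhs => rw [← hcomp]
    rw [Anomaly.Dy_X_mul, Anomaly.Dy_pcomp h g hg0, hcomp, ← mul_assoc]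
  have hveq : Dc D g - g * Dy g = (PowerSeries.X * T) * (Dc D g - g * Dy g) := by
    calc Dc D g - g * Dy g
        = (g * g + (PowerSeries.X * T) * Dc D g) - g * (g + (PowerSeries.X * T) * Dy g) := by
          rw [← hDcg, ← hDyg]
      _ = (PowerSeries.X * T) * (Dc D g - g * Dy g) := by ring
  have hv0 : PowerSeries.coeff 0 (PowerSeries.X * T) = 0 := by
    rw [PowerSeries.coeff_zero_eq_constantCoeff_apply, map_mul, PowerSeries.constantCoeff_X,
      zero_mul]
  have hzero : ∀ N, PowerSeries.coeff N (Dc D g - g * Dy g) = 0 := by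
    intro N
    induction N using Nat.strong_induction_on with
    | _ N ih =>
      rw [hveq, PowerSeries.coeff_mul]
      refine Finset.sum_eq_zero fun p hp => ?_
      have hpN : p.1 + p.2 = N := Finset.HasAntidiagonal.mem_antidiagonal.mp hp
      rcases Nat.eq_zero_or_pos p.1 with h1 | h1
      · rw [h1, hv0, zero_mul]
      · have hlt : p.2 < N := by omega
        rw [ih p.2 hlt, mul_zero]
  have hsub : Dc D g - g * Dy g = 0 :=
    PowerSeries.ext fun N => by rw [hzero N, map_zero]
  exact sub_eq_zero.mp hsub


end
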